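/- Two Kuramoto oscillators with equal initial phases θ₁(0) = θ₂(0) and |ω₁ − ω₂| ≤ K achieve frequency synchronization: |θ₁'(t) − θ₂'(t)| → 0 as t → ∞. -/

import Mathlib

open Real Filter Set Metric

private lemma sin_lip : LipschitzWith 1 Real.sin := by
  apply lipschitzWith_of_nnnorm_deriv_le Real.differentiable_sin
  intro x
  rw [Real.deriv_sin]
  rw [← NNReal.coe_le_coe]
  simpa [Real.norm_eq_abs] using Real.abs_cos_le_one x

private lemma field_lip (K d : ℝ) (hK : 0 ≤ K) :
    LipschitzWith K.toNNReal (fun x : ℝ => d - K * Real.sin x) := by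
  apply LipschitzWith.of_dist_le_mul
  intro x y
  have h := sin_lip.dist_le_mul x y
  simp only [Real.dist_eq, NNReal.coe_one, one_mul] at h ⊢
  have e : (d - K * Real.sin x) - (d - K * Real.sin y) = -(K * (Real.sin x - Real.sin y)) := by
    ring
  rw [e, abs_neg, abs_mul, abs_of_nonneg hK, Real.coe_toNNReal K hK]
  exact mul_le_mul_of_nonneg_left h hK

/-- If a solution touches an equilibrium at some time `t₀ ≥ 0`, it was there at time 0. -/
private lemma no_touch (K d : ℝ) (hK : 0 < K) (φ : ℝ → ℝ)
    (hφ : ∀ t ≥ 0, HasDerivAt φ (d - K * Real.sin (φ t)) t)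
    (c : ℝ) (hc : d - K * Real.sin c = 0) {t₀ : ℝ} (ht₀ : 0 ≤ t₀) (h : φ t₀ = c) :
    φ 0 = c := by
  have hv : ∀ t : ℝ, LipschitzOnWith K.toNNReal
      ((fun _ x => d - K * Real.sin x) t) ((fun _ : ℝ => (univ : Set ℝ)) t) :=
    fun t => (field_lip K d hK.le).lipschitzOnWith
  have key : EqOn φ (fun _ => c) (Icc 0 t₀) := by
    apply ODE_solution_unique_of_mem_Icc_left (fun t _ => hv t)
    · exact fun t ht => (hφ t ht.1).continuousAt.continuousWithinAt
    · exact fun t ht => (hφ t ht.1.le).hasDerivWithinAt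
    · exact fun t _ => mem_univ _
    · exact continuousOn_const
    · intro t _
      have : HasDerivWithinAt (fun _ : ℝ => c) 0 (Iic t) t := hasDerivWithinAt_const t _ c
      simpa [hc] using this
    · exact fun t _ => mem_univ _
    · exact h
  exact key ⟨le_refl 0, ht₀⟩

private lemma barrier_lt (K d : ℝ) (hK : 0 < K) (φ : ℝ → ℝ)
    (hφ : ∀ t ≥ 0, HasDerivAt φ (d - K * Real.sin (φ t)) t)
    (c : ℝ) (hc : d - K * Real.sin c = 0) (h0 : φ 0 < c) {t : ℝ} (ht : 0 ≤ t) :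
    φ t < c := by
  by_contra h
  push_neg at h
  have hcont : ContinuousOn φ (Icc 0 t) :=
    fun s hs => (hφ s hs.1).continuousAt.continuousWithinAt
  have : c ∈ φ '' Icc 0 t := intermediate_value_Icc ht hcont ⟨h0.le, h⟩
  obtain ⟨s, hs, hsc⟩ := this
  exact absurd (no_touch K d hK φ hφ c hc hs.1 hsc) h0.ne

private lemma barrier_gt (K d : ℝ) (hK : 0 < K) (φ : ℝ → ℝ)
    (hφ : ∀ t ≥ 0, HasDerivAt φ (d - K * Real.sin (φ t)) t)
    (c : ℝ) (hc : d - K * Real.sin c = 0) (h0 : c < φ 0) {t : ℝ} (ht : 0 ≤ t) :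
    c < φ t := by
  by_contra h
  push_neg at h
  have hcont : ContinuousOn φ (Icc 0 t) :=
    fun s hs => (hφ s hs.1).continuousAt.continuousWithinAt
  have : c ∈ φ '' Icc 0 t := intermediate_value_Icc' ht hcont ⟨h, h0.le⟩
  obtain ⟨s, hs, hsc⟩ := this
  exact absurd (no_touch K d hK φ hφ c hc hs.1 hsc) h0.ne'

private lemma sin_lt_on_interval {c₁ x : ℝ} (hc₁0 : 0 < c₁) (hc₁2 : c₁ ≤ π / 2)
    (hlb : -π - c₁ < x) (hub : x < c₁) : Real.sin x < Real.sin c₁ := by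
  have hπ := Real.pi_pos
  have hc₁mem : c₁ ∈ Icc (-(π/2)) (π/2) := ⟨by linarith, hc₁2⟩
  rcases le_or_gt x (-(π/2)) with hx | hx
  · have hy : Real.sin x = Real.sin (-π - x) := by
      have : Real.sin (-π - x) = Real.sin (-π) * Real.cos x - Real.cos (-π) * Real.sin x := by
        rw [Real.sin_sub]
      simp at this
      linarith [this]
    rw [hy]
    apply Real.strictMonoOn_sin ⟨by linarith, by linarith⟩ hc₁mem (by linarith)
  · exact Real.strictMonoOn_sin ⟨hx.le, by linarith⟩ hc₁mem hub

private lemma aux (K d : ℝ) (hK : 0 < K) (hd0 : 0 ≤ d) (hdK : d ≤ K) (φ : ℝ → ℝ)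
    (hφ : ∀ t ≥ 0, HasDerivAt φ (d - K * Real.sin (φ t)) t) (h0 : φ 0 = 0) :
    Tendsto (fun t => |d - K * Real.sin (φ t)|) atTop (nhds 0) := by
  rcases eq_or_lt_of_le hd0 with hd | hd
  · -- d = 0 : the solution is identically 0
    have hzero : ∀ t ≥ 0, φ t = 0 := by
      intro t ht
      have hv : ∀ s : ℝ, LipschitzOnWith K.toNNReal
          ((fun _ x => d - K * Real.sin x) s) ((fun _ : ℝ => (univ : Set ℝ)) s) :=
        fun s => (field_lip K d hK.le).lipschitzOnWith
      have key : EqOn φ (fun _ => (0 : ℝ)) (Icc 0 t) := by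
        apply ODE_solution_unique_of_mem_Icc_right (fun t _ => hv t)
        · exact fun s hs => (hφ s hs.1).continuousAt.continuousWithinAt
        · exact fun s hs => (hφ s hs.1).hasDerivWithinAt
        · exact fun s _ => mem_univ _
        · exact continuousOn_const
        · intro s _
          have : HasDerivWithinAt (fun _ : ℝ => (0 : ℝ)) 0 (Ici s) s :=
            hasDerivWithinAt_const s _ 0
          simpa [← hd] using this
        · exact fun s _ => mem_univ _
        · exact h0
      exact key ⟨ht, le_refl t⟩
    have : (fun t => |d - K * Real.sin (φ t)|) =ᶠ[atTop] (fun _ => (0 : ℝ)) := by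
      filter_upwards [eventually_ge_atTop (0 : ℝ)] with t ht
      simp [hzero t ht, ← hd]
    exact Tendsto.congr' this.symm tendsto_const_nhds
  · -- d > 0
    have hπ := Real.pi_pos
    set c₁ := Real.arcsin (d / K) with hc₁def
    have hdK1 : d / K ≤ 1 := (div_le_one hK).2 hdK
    have hdK0 : 0 < d / K := div_pos hd hK
    have hc₁0 : 0 < c₁ := Real.arcsin_pos.2 hdK0
    have hc₁2 : c₁ ≤ π / 2 := Real.arcsin_le_pi_div_two _
    have hsin₁ : Real.sin c₁ = d / K := Real.sin_arcsin (by linarith) hdK1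
    have heq₁ : d - K * Real.sin c₁ = 0 := by rw [hsin₁]; field_simp; ring
    have hsin₂ : Real.sin (-π - c₁) = d / K := by
      have : Real.sin (-π - c₁) = Real.sin (-π) * Real.cos c₁ - Real.cos (-π) * Real.sin c₁ := by
        rw [Real.sin_sub]
      simpa [hsin₁] using this
    have heq₂ : d - K * Real.sin (-π - c₁) = 0 := by rw [hsin₂]; field_simp; ring
    -- barriers
    have hub : ∀ t ≥ 0, φ t < c₁ := fun t ht =>
      barrier_lt K d hK φ hφ c₁ heq₁ (by rw [h0]; exact hc₁0) ht
    have hlb : ∀ t ≥ 0, -π - c₁ < φ t := fun t ht =>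
      barrier_gt K d hK φ hφ (-π - c₁) heq₂ (by rw [h0]; linarith) ht
    -- the derivative is positive for t ≥ 0
    have hpos : ∀ t ≥ 0, 0 < d - K * Real.sin (φ t) := by
      intro t ht
      have := sin_lt_on_interval hc₁0 hc₁2 (hlb t ht) (hub t ht)
      have h2 : K * Real.sin (φ t) < K * Real.sin c₁ := by
        exact mul_lt_mul_of_pos_left this hK
      rw [hsin₁] at h2
      have : K * (d / K) = d := by field_simp
      linarith [h2, this]
    -- φ is monotone on [0, ∞)
    have hcont : ContinuousOn φ (Ici 0) :=
      fun t ht => (hφ t ht).continuousAt.continuousWithinAt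
    have hmono : MonotoneOn φ (Ici 0) := by
      apply (strictMonoOn_of_deriv_pos (convex_Ici 0) hcont ?_).monotoneOn
      intro x hx
      rw [interior_Ici] at hx
      rw [(hφ x hx.le).deriv]
      exact hpos x hx.le
    -- the shifted function and its limit
    set ψ : ℝ → ℝ := fun t => φ (max t 0) with hψdef
    have hψmono : Monotone ψ := fun s t hst =>
      hmono (mem_Ici.2 (le_max_right s 0)) (mem_Ici.2 (le_max_right t 0))
        (max_le_max hst le_rfl)
    have hψbdd : BddAbove (range ψ) := by
      refine ⟨c₁, ?_⟩
      rintro _ ⟨t, rfl⟩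
      exact (hub (max t 0) (le_max_right t 0)).le
    set L := ⨆ t, ψ t with hLdef
    have hψtend : Tendsto ψ atTop (nhds L) := tendsto_atTop_ciSup hψmono hψbdd
    have hEq : ψ =ᶠ[atTop] φ := by
      filter_upwards [eventually_ge_atTop (0 : ℝ)] with t ht
      simp [hψdef, max_eq_left ht]
    have htend : Tendsto φ atTop (nhds L) := hψtend.congr' hEq
    have hψle : ∀ t, ψ t ≤ L := fun t => le_ciSup hψbdd t
    have hL0 : 0 ≤ L := by
      have := hψle 0
      simpa [hψdef, h0] using this
    have hLc₁ : L ≤ c₁ := ciSup_le fun t => (hub (max t 0) (le_max_right t 0)).le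
    have hφle : ∀ t ≥ 0, φ t ≤ L := by
      intro t ht
      have := hψle t
      simpa [hψdef, max_eq_left ht] using this
    have hφ0 : ∀ t ≥ 0, 0 ≤ φ t := by
      intro t ht
      have := hmono (mem_Ici.2 (le_refl 0)) (mem_Ici.2 ht) ht
      simpa [h0] using this
    -- the limiting derivative ε
    set ε := d - K * Real.sin L with hεdef
    have hεle : ∀ t ≥ 0, ε ≤ d - K * Real.sin (φ t) := by
      intro t ht
      have hsmono : Real.sin (φ t) ≤ Real.sin L := by
        apply Real.strictMonoOn_sin.monotoneOn ⟨by linarith [hφ0 t ht], by linarith [hub t ht]⟩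
          ⟨by linarith, by linarith⟩ (hφle t ht)
      have := mul_le_mul_of_nonneg_left hsmono hK.le
      simp only [hεdef]
      linarith
    -- linear growth : ε * t ≤ φ t
    have hgrowth : ∀ t ≥ 0, ε * t ≤ φ t := by
      intro t ht
      set g : ℝ → ℝ := fun s => φ s - ε * s with hgdef
      have hgmono : MonotoneOn g (Ici 0) := by
        apply monotoneOn_of_deriv_nonneg (convex_Ici 0)
        · exact hcont.sub (continuous_const.mul continuous_id).continuousOn
        · intro x hx
          rw [interior_Ici] at hx
          exact ((hφ x hx.le).sub ((hasDerivAt_id x).const_mul ε)).differentiableAt.differentiableWithinAt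
        · intro x hx
          rw [interior_Ici] at hx
          have hd' : HasDerivAt g ((d - K * Real.sin (φ x)) - ε * 1) x :=
            (hφ x hx.le).sub ((hasDerivAt_id x).const_mul ε)
          rw [hd'.deriv]
          have := hεle x hx.le
          linarith
      have := hgmono (mem_Ici.2 (le_refl 0)) (mem_Ici.2 ht) ht
      simp only [hgdef, h0] at this
      linarith [this]
    -- ε ≤ 0
    have hεnonpos : ε ≤ 0 := by
      by_contra h
      push_neg at h
      have ht0 : (0:ℝ) ≤ (c₁ + 1) / ε := div_nonneg (by linarith) h.le
      have h1 := hgrowth ((c₁ + 1) / ε) ht0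
      have h2 := hub ((c₁ + 1) / ε) ht0
      rw [mul_div_cancel₀ _ h.ne'] at h1
      linarith
    -- ε ≥ 0
    have hεnonneg : 0 ≤ ε := by
      have : Real.sin L ≤ Real.sin c₁ :=
        Real.strictMonoOn_sin.monotoneOn ⟨by linarith, by linarith⟩
          ⟨by linarith, hc₁2⟩ hLc₁
      have := mul_le_mul_of_nonneg_left this hK.le
      rw [hsin₁] at this
      have hKd : K * (d / K) = d := by field_simp
      simp only [hεdef]
      linarith
    have hε : ε = 0 := le_antisymm hεnonpos hεnonneg
    -- conclude by continuity
    have hcontF : Continuous (fun x : ℝ => |d - K * Real.sin x|) :=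
      (continuous_const.sub (continuous_const.mul Real.continuous_sin)).abs
    have := (hcontF.tendsto L).comp htend
    have hval : |d - K * Real.sin L| = 0 := by
      rw [show d - K * Real.sin L = ε from rfl, hε, abs_zero]
    rw [hval] at this
    exact this

theorem stmt9 (K ω₁ ω₂ : ℝ) (hK : 0 < K) (hgap : |ω₁ - ω₂| ≤ K) (θ₁ θ₂ : ℝ → ℝ)
    (h₁ : ∀ t ≥ 0, HasDerivAt θ₁ (ω₁ + K / 2 * Real.sin (θ₂ t - θ₁ t)) t)
    (h₂ : ∀ t ≥ 0, HasDerivAt θ₂ (ω₂ + K / 2 * Real.sin (θ₁ t - θ₂ t)) t)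
    (hinit : θ₁ 0 = θ₂ 0) :
    Tendsto (fun t => |(ω₁ + K / 2 * Real.sin (θ₂ t - θ₁ t)) -
      (ω₂ + K / 2 * Real.sin (θ₁ t - θ₂ t))|) atTop (nhds 0) := by
  rcases le_total ω₂ ω₁ with h | h
  · set d := ω₁ - ω₂ with hddef
    set φ : ℝ → ℝ := fun t => θ₁ t - θ₂ t with hφdef
    have hd0 : 0 ≤ d := by simp [hddef]; linarith
    have hdK : d ≤ K := le_trans (le_abs_self _) hgap
    have hφ : ∀ t ≥ 0, HasDerivAt φ (d - K * Real.sin (φ t)) t := by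
      intro t ht
      have := (h₁ t ht).sub (h₂ t ht)
      refine this.congr_deriv ?_
      have : θ₂ t - θ₁ t = -(θ₁ t - θ₂ t) := by ring
      rw [this, Real.sin_neg]
      simp only [hφdef, hddef]
      ring
    have h0 : φ 0 = 0 := by simp [hφdef, hinit]
    have hres := aux K d hK hd0 hdK φ hφ h0
    convert hres using 2 with t
    have : θ₂ t - θ₁ t = -(θ₁ t - θ₂ t) := by ring
    rw [this, Real.sin_neg]
    simp only [hφdef, hddef]
    ring_nf
  · set d := ω₂ - ω₁ with hddef
    set φ : ℝ → ℝ := fun t => θ₂ t - θ₁ t with hφdef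
    have hd0 : 0 ≤ d := by simp [hddef]; linarith
    have hdK : d ≤ K := by
      rw [abs_sub_comm] at hgap
      exact le_trans (le_abs_self _) hgap
    have hφ : ∀ t ≥ 0, HasDerivAt φ (d - K * Real.sin (φ t)) t := by
      intro t ht
      have := (h₂ t ht).sub (h₁ t ht)
      refine this.congr_deriv ?_
      have : θ₁ t - θ₂ t = -(θ₂ t - θ₁ t) := by ring
      rw [this, Real.sin_neg]
      simp only [hφdef, hddef]
      ring
    have h0 : φ 0 = 0 := by simp [hφdef, hinit]
    have hres := aux K d hK hd0 hdK φ hφ h0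
    convert hres using 2 with t
    rw [abs_sub_comm]
    have : θ₁ t - θ₂ t = -(θ₂ t - θ₁ t) := by ring
    rw [this, Real.sin_neg]
    simp only [hφdef, hddef]
    ring_nf
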